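/- Let U be a uniform random variable on [0,1] and for probability measures μ, ν on ℝ with finite second moments let F_μ^{-1}, F_ν^{-1} denote their quantile functions. Then E[(F_μ^{-1}(U) - F_ν^{-1}(U))²] equals the squared quadratic Wasserstein distance W₂²(μ,ν), i.e. the coupling (F_μ^{-1}(U), F_ν^{-1}(U)) is optimal for the quadratic cost. -/

import Mathlib

open MeasureTheory ProbabilityTheory Real BigOperators

noncomputable def Wsq (μ ν : MeasureTheory.Measure ℝ) : ℝ :=
  sInf { c : ℝ | ∃ m : MeasureTheory.Measure (ℝ × ℝ),
    m.map Prod.fst = μ ∧ m.map Prod.snd = ν ∧ c = ∫ p, (p.1 - p.2) ^ 2 ∂m }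

/-- Quadratic Wasserstein distance. -/
noncomputable def W2 (μ ν : MeasureTheory.Measure ℝ) : ℝ := Real.sqrt (Wsq μ ν)

/-- Finite second moment. -/
def FiniteSecondMoment (μ : MeasureTheory.Measure ℝ) : Prop :=
  MeasureTheory.Integrable (fun x => x ^ 2) μ

/-- Quantile function of a measure on ℝ. -/
noncomputable def quantile (μ : MeasureTheory.Measure ℝ) (t : ℝ) : ℝ :=
  sInf { x : ℝ | t ≤ ProbabilityTheory.cdf μ x }

open Set Filter Topology

set_option linter.unusedSectionVars false

/-! ### Auxiliary facts about quantile functions -/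

section Quantile
variable (μ : Measure ℝ) [IsProbabilityMeasure μ]

lemma qset_nonempty {u : ℝ} (h1 : u < 1) : { x : ℝ | u ≤ cdf μ x }.Nonempty := by
  have := (tendsto_cdf_atTop μ).eventually_const_le h1
  rcases this.exists with ⟨x, hx⟩
  exact ⟨x, hx⟩

lemma qset_bddBelow {u : ℝ} (h0 : 0 < u) : BddBelow { x : ℝ | u ≤ cdf μ x } := by
  have := (tendsto_cdf_atBot μ).eventually_lt_const h0
  rcases (eventually_atBot.mp this) with ⟨x₀, hx₀⟩
  refine ⟨x₀, fun y hy => ?_⟩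
  by_contra hlt
  push_neg at hlt
  exact absurd hy (not_le.mpr (hx₀ y hlt.le))

lemma le_cdf_quantile {u : ℝ} (h0 : 0 < u) (h1 : u < 1) : u ≤ cdf μ (quantile μ u) := by
  set S := { x : ℝ | u ≤ cdf μ x } with hS
  have hne : S.Nonempty := qset_nonempty μ h1
  have hbdd : BddBelow S := qset_bddBelow μ h0
  have hclos : sInf S ∈ closure S := csInf_mem_closure hne hbdd
  have hsub : S ⊆ Ici (sInf S) := fun y hy => csInf_le hbdd hy
  have hcont : ContinuousWithinAt (cdf μ) S (sInf S) :=
    ((cdf μ).right_continuous (sInf S)).mono hsub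
  have hne' : (𝓝[S] (sInf S)).NeBot := mem_closure_iff_nhdsWithin_neBot.mp hclos
  show u ≤ cdf μ (sInf S)
  refine ge_of_tendsto hcont ?_
  filter_upwards [self_mem_nhdsWithin] with y hy using hy

lemma quantile_le_iff {u x : ℝ} (h0 : 0 < u) (h1 : u < 1) :
    quantile μ u ≤ x ↔ u ≤ cdf μ x := by
  constructor
  · intro h
    exact (le_cdf_quantile μ h0 h1).trans (monotone_cdf μ h)
  · intro h
    exact csInf_le (qset_bddBelow μ h0) h

lemma monotoneOn_quantile : MonotoneOn (quantile μ) (Ioo 0 1) := by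
  intro a ha b hb hab
  exact le_csInf (qset_nonempty μ hb.2) fun x hx =>
    csInf_le (qset_bddBelow μ ha.1) (hab.trans hx)

lemma aemeasurable_quantile :
    AEMeasurable (quantile μ) (volume.restrict (Ioo (0:ℝ) 1)) :=
  aemeasurable_restrict_of_monotoneOn measurableSet_Ioo (monotoneOn_quantile μ)

lemma map_quantile : (volume.restrict (Ioo (0:ℝ) 1)).map (quantile μ) = μ := by
  have hq := aemeasurable_quantile μ
  have hprob : IsProbabilityMeasure ((volume.restrict (Ioo (0:ℝ) 1)).map (quantile μ)) := by
    constructor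
    rw [Measure.map_apply_of_aemeasurable hq MeasurableSet.univ]
    simp [Real.volume_Ioo]
  refine Measure.ext_of_Iic _ _ (fun x => ?_)
  rw [Measure.map_apply_of_aemeasurable hq measurableSet_Iic]
  rw [Measure.restrict_apply' measurableSet_Ioo]
  have hset : quantile μ ⁻¹' Iic x ∩ Ioo 0 1 = Iic (cdf μ x) ∩ Ioo 0 1 := by
    ext u
    simp only [mem_inter_iff, mem_preimage, mem_Iic, mem_Ioo, and_congr_left_iff]
    intro hu
    exact quantile_le_iff μ hu.1 hu.2
  rw [hset, ← ofReal_cdf μ x]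
  have h0 : 0 ≤ cdf μ x := cdf_nonneg μ x
  have h1 : cdf μ x ≤ 1 := cdf_le_one μ x
  rcases lt_or_eq_of_le h1 with h1' | h1'
  · have : Iic (cdf μ x) ∩ Ioo (0:ℝ) 1 = Ioc 0 (cdf μ x) := by
      ext u; simp only [mem_inter_iff, mem_Iic, mem_Ioo, mem_Ioc]
      constructor
      · rintro ⟨h, h2, _⟩; exact ⟨h2, h⟩
      · rintro ⟨h2, h⟩; exact ⟨h, h2, lt_of_le_of_lt h h1'⟩
    rw [this, Real.volume_Ioc, sub_zero]
  · have : Iic (cdf μ x) ∩ Ioo (0:ℝ) 1 = Ioo 0 1 := by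
      rw [inter_eq_right]
      intro u hu; rw [mem_Iic, h1']; exact hu.2.le
    rw [this, Real.volume_Ioo, ← h1']
    norm_num

lemma lt_quantile_iff {u x : ℝ} (h0 : 0 < u) (h1 : u < 1) :
    x < quantile μ u ↔ cdf μ x < u := by
  rw [← not_le, ← not_le, quantile_le_iff μ h0 h1]

end Quantile

/-! ### The Hoeffding kernel `hh` -/

noncomputable def hh (s x : ℝ) : ℝ :=
  (if s < x then (1:ℝ) else 0) - (if s < 0 then (1:ℝ) else 0)

lemma hh_eq (s x : ℝ) :
    hh s x = (Ico (0:ℝ) x).indicator (fun _ => (1:ℝ)) s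
      - (Ico x (0:ℝ)).indicator (fun _ => (1:ℝ)) s := by
  unfold hh
  by_cases h1 : s < x <;> by_cases h2 : s < 0 <;>
    simp [indicator_apply, mem_Ico, h1, h2, not_lt.mp, le_of_not_gt]

lemma measurable_hh : Measurable (fun p : ℝ × ℝ => hh p.1 p.2) := by
  unfold hh
  apply Measurable.sub
  · exact Measurable.ite (measurableSet_lt measurable_fst measurable_snd)
      measurable_const measurable_const
  · exact Measurable.ite (measurableSet_lt measurable_fst measurable_const)
      measurable_const measurable_const

lemma integrable_hh (x : ℝ) : Integrable (fun s => hh s x) volume := by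
  simp_rw [hh_eq]
  apply Integrable.sub <;>
  · rw [integrable_indicator_iff measurableSet_Ico]
    apply (integrableOn_const_iff).mpr
    right
    rw [Real.volume_Ico]
    exact ENNReal.ofReal_lt_top

lemma integral_hh (x : ℝ) : ∫ s, hh s x = x := by
  simp_rw [hh_eq]
  rw [integral_sub, integral_indicator measurableSet_Ico, integral_indicator measurableSet_Ico]
  · simp only [integral_const, Measure.restrict_apply_univ, smul_eq_mul, mul_one, measureReal_def,
      Real.volume_Ico, ENNReal.toReal_ofReal']
    rcases le_or_gt 0 x with h | h
    · rw [max_eq_left (by linarith), max_eq_right (by linarith)]; ring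
    · rw [max_eq_right (by linarith), max_eq_left (by linarith)]; ring
  · rw [integrable_indicator_iff measurableSet_Ico]
    exact (integrableOn_const_iff).mpr (Or.inr (by rw [Real.volume_Ico]; exact ENNReal.ofReal_lt_top))
  · rw [integrable_indicator_iff measurableSet_Ico]
    exact (integrableOn_const_iff).mpr (Or.inr (by rw [Real.volume_Ico]; exact ENNReal.ofReal_lt_top))

lemma abs_hh_eq (s x : ℝ) :
    |hh s x| = (Ico (0:ℝ) x).indicator (fun _ => (1:ℝ)) s
      + (Ico x (0:ℝ)).indicator (fun _ => (1:ℝ)) s := by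
  rcases le_or_gt 0 x with h | h
  · rw [hh_eq]
    have : Ico x (0:ℝ) = ∅ := Ico_eq_empty (by intro hc; linarith)
    simp only [this, indicator_empty, sub_zero, add_zero]
    exact abs_of_nonneg (indicator_nonneg (fun _ _ => zero_le_one) s)
  · rw [hh_eq]
    have : Ico (0:ℝ) x = ∅ := Ico_eq_empty (by intro hc; linarith)
    simp only [this, indicator_empty, zero_sub, zero_add, abs_neg]
    exact abs_of_nonneg (indicator_nonneg (fun _ _ => zero_le_one) s)

lemma integral_abs_hh (x : ℝ) : ∫ s, |hh s x| = |x| := by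
  simp_rw [abs_hh_eq]
  have hint : ∀ a b : ℝ, Integrable ((Ico a b).indicator (fun _ => (1:ℝ))) volume := by
    intro a b
    rw [integrable_indicator_iff measurableSet_Ico]
    exact (integrableOn_const_iff).mpr (Or.inr (by rw [Real.volume_Ico]; exact ENNReal.ofReal_lt_top))
  rw [integral_add (hint 0 x) (hint x 0), integral_indicator measurableSet_Ico,
    integral_indicator measurableSet_Ico]
  simp only [integral_const, Measure.restrict_apply_univ, smul_eq_mul, mul_one, measureReal_def,
    Real.volume_Ico, ENNReal.toReal_ofReal']
  rcases le_or_gt 0 x with h | h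
  · rw [max_eq_left (by linarith), max_eq_right (by linarith), abs_of_nonneg h]; ring
  · rw [max_eq_right (by linarith), max_eq_left (by linarith), abs_of_neg h]; ring

/-! ### Generic coupling facts -/

section Coupling
variable {μ ν : Measure ℝ} [IsProbabilityMeasure μ] [IsProbabilityMeasure ν]
variable {m : Measure (ℝ × ℝ)}

lemma coupling_prob (hm1 : m.map Prod.fst = μ) : IsProbabilityMeasure m := by
  constructor
  have : m.map Prod.fst Set.univ = 1 := by rw [hm1]; exact measure_univ
  rwa [Measure.map_apply measurable_fst MeasurableSet.univ, preimage_univ] at this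

lemma int_sq_fst (hm1 : m.map Prod.fst = μ) (hμ : Integrable (fun x => x ^ 2) μ) :
    Integrable (fun p : ℝ × ℝ => p.1 ^ 2) m := by
  rw [← hm1] at hμ
  exact (integrable_map_measure (by fun_prop) measurable_fst.aemeasurable).1 hμ

lemma int_sq_snd (hm2 : m.map Prod.snd = ν) (hν : Integrable (fun x => x ^ 2) ν) :
    Integrable (fun p : ℝ × ℝ => p.2 ^ 2) m := by
  rw [← hm2] at hν
  exact (integrable_map_measure (by fun_prop) measurable_snd.aemeasurable).1 hν

lemma int_abs_mul (hsq1 : Integrable (fun p : ℝ × ℝ => p.1 ^ 2) m)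
    (hsq2 : Integrable (fun p : ℝ × ℝ => p.2 ^ 2) m) :
    Integrable (fun p : ℝ × ℝ => |p.1| * |p.2|) m := by
  have hadd : Integrable (fun p : ℝ × ℝ => p.1 ^ 2 + p.2 ^ 2) m := hsq1.add hsq2
  refine Integrable.mono hadd ((measurable_fst.abs.mul measurable_snd.abs).aestronglyMeasurable) ?_
  filter_upwards with p
  simp only [norm_mul, Real.norm_eq_abs, abs_abs]
  have h1 : |p.1| * |p.2| ≤ p.1 ^ 2 + p.2 ^ 2 := by
    nlinarith [sq_abs p.1, sq_abs p.2, sq_nonneg (|p.1| - |p.2|)]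
  exact h1.trans (le_abs_self _)

lemma int_mul (hsq1 : Integrable (fun p : ℝ × ℝ => p.1 ^ 2) m)
    (hsq2 : Integrable (fun p : ℝ × ℝ => p.2 ^ 2) m) :
    Integrable (fun p : ℝ × ℝ => p.1 * p.2) m := by
  refine Integrable.mono (int_abs_mul hsq1 hsq2) (by fun_prop) ?_
  filter_upwards with p
  simp [abs_mul, abs_abs, le_abs_self, Real.norm_eq_abs]

lemma integral_sq_cost (hm1 : m.map Prod.fst = μ) (hm2 : m.map Prod.snd = ν)
    (hμ : Integrable (fun x => x ^ 2) μ) (hν : Integrable (fun x => x ^ 2) ν) :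
    ∫ p, (p.1 - p.2) ^ 2 ∂m
      = ∫ x, x ^ 2 ∂μ + ∫ y, y ^ 2 ∂ν - 2 * ∫ p, p.1 * p.2 ∂m := by
  have hsq1 := int_sq_fst hm1 hμ
  have hsq2 := int_sq_snd hm2 hν
  have hmul := int_mul hsq1 hsq2
  have h1 : ∫ x, x ^ 2 ∂μ = ∫ p, p.1 ^ 2 ∂m := by
    rw [← hm1, integral_map measurable_fst.aemeasurable (by fun_prop)]
  have h2 : ∫ y, y ^ 2 ∂ν = ∫ p, p.2 ^ 2 ∂m := by
    rw [← hm2, integral_map measurable_snd.aemeasurable (by fun_prop)]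
  rw [h1, h2]
  have : ∀ p : ℝ × ℝ, (p.1 - p.2) ^ 2 = p.1 ^ 2 + p.2 ^ 2 - 2 * (p.1 * p.2) := by
    intro p; ring
  simp_rw [this]
  have hadd : Integrable (fun p : ℝ × ℝ => p.1 ^ 2 + p.2 ^ 2) m := hsq1.add hsq2
  rw [integral_sub hadd (hmul.const_mul 2), integral_add hsq1 hsq2,
    MeasureTheory.integral_const_mul]

end Coupling

/-! ### The inner integral expansion -/

section Inner
variable {μ ν : Measure ℝ} [IsProbabilityMeasure μ] [IsProbabilityMeasure ν]
variable {m : Measure (ℝ × ℝ)} [IsProbabilityMeasure m]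

lemma hh_prod_eq (s t : ℝ) : ∀ p : ℝ × ℝ,
    hh s p.1 * hh t p.2
      = {p : ℝ × ℝ | s < p.1 ∧ t < p.2}.indicator (fun _ => (1:ℝ)) p
        - (if t < 0 then (1:ℝ) else 0) * ({p : ℝ × ℝ | s < p.1}.indicator (fun _ => (1:ℝ)) p)
        - (if s < 0 then (1:ℝ) else 0) * ({p : ℝ × ℝ | t < p.2}.indicator (fun _ => (1:ℝ)) p)
        + (if s < 0 then (1:ℝ) else 0) * (if t < 0 then (1:ℝ) else 0) := by
  intro p
  unfold hh
  by_cases h1 : s < p.1 <;> by_cases h2 : t < p.2 <;> by_cases h3 : s < 0 <;>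
    by_cases h4 : t < 0 <;>
    simp [indicator_apply, h1, h2, h3, h4]

lemma measurableSet_quadrant (s t : ℝ) :
    MeasurableSet {p : ℝ × ℝ | s < p.1 ∧ t < p.2} := by
  have : {p : ℝ × ℝ | s < p.1 ∧ t < p.2} = Ioi s ×ˢ Ioi t := by
    ext p; simp [mem_prod]
  rw [this]
  exact measurableSet_Ioi.prod measurableSet_Ioi

lemma inner_integral (hm1 : m.map Prod.fst = μ) (hm2 : m.map Prod.snd = ν) (s t : ℝ) :
    ∫ p, hh s p.1 * hh t p.2 ∂m
      = (m {p : ℝ × ℝ | s < p.1 ∧ t < p.2}).toReal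
        - (if t < 0 then (1:ℝ) else 0) * (μ (Ioi s)).toReal
        - (if s < 0 then (1:ℝ) else 0) * (ν (Ioi t)).toReal
        + (if s < 0 then (1:ℝ) else 0) * (if t < 0 then (1:ℝ) else 0) := by
  have hA := measurableSet_quadrant s t
  have hB : MeasurableSet {p : ℝ × ℝ | s < p.1} := measurable_fst measurableSet_Ioi
  have hC : MeasurableSet {p : ℝ × ℝ | t < p.2} := measurable_snd measurableSet_Ioi
  have iA : Integrable ({p : ℝ × ℝ | s < p.1 ∧ t < p.2}.indicator (fun _ => (1:ℝ))) m := by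
    rw [integrable_indicator_iff hA]
    exact (integrableOn_const_iff).mpr (Or.inr (measure_lt_top m _))
  have iB : Integrable ({p : ℝ × ℝ | s < p.1}.indicator (fun _ => (1:ℝ))) m := by
    rw [integrable_indicator_iff hB]
    exact (integrableOn_const_iff).mpr (Or.inr (measure_lt_top m _))
  have iC : Integrable ({p : ℝ × ℝ | t < p.2}.indicator (fun _ => (1:ℝ))) m := by
    rw [integrable_indicator_iff hC]
    exact (integrableOn_const_iff).mpr (Or.inr (measure_lt_top m _))
  have hmB : m {p : ℝ × ℝ | s < p.1} = μ (Ioi s) := by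
    rw [← hm1, Measure.map_apply measurable_fst measurableSet_Ioi]; rfl
  have hmC : m {p : ℝ × ℝ | t < p.2} = ν (Ioi t) := by
    rw [← hm2, Measure.map_apply measurable_snd measurableSet_Ioi]; rfl
  calc ∫ p, hh s p.1 * hh t p.2 ∂m
      = ∫ p, ({p : ℝ × ℝ | s < p.1 ∧ t < p.2}.indicator (fun _ => (1:ℝ)) p
        - (if t < 0 then (1:ℝ) else 0) * ({p : ℝ × ℝ | s < p.1}.indicator (fun _ => (1:ℝ)) p)
        - (if s < 0 then (1:ℝ) else 0) * ({p : ℝ × ℝ | t < p.2}.indicator (fun _ => (1:ℝ)) p)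
        + (if s < 0 then (1:ℝ) else 0) * (if t < 0 then (1:ℝ) else 0)) ∂m := by
        exact integral_congr_ae (Eventually.of_forall (hh_prod_eq s t))
    _ = _ := by
        have iB' : Integrable (fun p : ℝ × ℝ =>
            (if t < 0 then (1:ℝ) else 0) * ({p : ℝ × ℝ | s < p.1}.indicator (fun _ => (1:ℝ)) p)) m :=
          iB.const_mul _
        have iC' : Integrable (fun p : ℝ × ℝ =>
            (if s < 0 then (1:ℝ) else 0) * ({p : ℝ × ℝ | t < p.2}.indicator (fun _ => (1:ℝ)) p)) m :=
          iC.const_mul _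
        have iAB : Integrable (fun p : ℝ × ℝ =>
            {p : ℝ × ℝ | s < p.1 ∧ t < p.2}.indicator (fun _ => (1:ℝ)) p
              - (if t < 0 then (1:ℝ) else 0) * ({p : ℝ × ℝ | s < p.1}.indicator (fun _ => (1:ℝ)) p)) m :=
          iA.sub iB'
        have iABC : Integrable (fun p : ℝ × ℝ =>
            {p : ℝ × ℝ | s < p.1 ∧ t < p.2}.indicator (fun _ => (1:ℝ)) p
              - (if t < 0 then (1:ℝ) else 0) * ({p : ℝ × ℝ | s < p.1}.indicator (fun _ => (1:ℝ)) p)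
              - (if s < 0 then (1:ℝ) else 0) * ({p : ℝ × ℝ | t < p.2}.indicator (fun _ => (1:ℝ)) p)) m :=
          iAB.sub iC'
        rw [integral_add iABC (integrable_const _), integral_sub iAB iC',
          integral_sub iA iB', MeasureTheory.integral_const_mul,
          MeasureTheory.integral_const_mul, integral_const,
          integral_indicator hA, integral_indicator hB, integral_indicator hC]
        simp only [integral_const, Measure.restrict_apply_univ, smul_eq_mul, mul_one, measure_univ, measureReal_def,
          ENNReal.toReal_one, one_mul]
        rw [hmB, hmC]

end Inner

/-! ### The Fubini swap -/

section Swap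
variable {m : Measure (ℝ × ℝ)} [IsProbabilityMeasure m]

lemma measurable_kernel :
    Measurable (fun z : (ℝ × ℝ) × (ℝ × ℝ) => hh z.2.1 z.1.1 * hh z.2.2 z.1.2) := by
  refine Measurable.mul ?_ ?_
  · exact measurable_hh.comp ((measurable_snd.fst).prodMk (measurable_fst.fst))
  · exact measurable_hh.comp ((measurable_snd.snd).prodMk (measurable_fst.snd))

lemma integrable_kernel (hsq1 : Integrable (fun p : ℝ × ℝ => p.1 ^ 2) m)
    (hsq2 : Integrable (fun p : ℝ × ℝ => p.2 ^ 2) m) :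
    Integrable (fun z : (ℝ × ℝ) × (ℝ × ℝ) => hh z.2.1 z.1.1 * hh z.2.2 z.1.2)
      (m.prod (volume : Measure (ℝ × ℝ))) := by
  rw [integrable_prod_iff measurable_kernel.aestronglyMeasurable]
  constructor
  · refine Eventually.of_forall fun p => ?_
    have : Integrable (fun q : ℝ × ℝ => hh q.1 p.1 * hh q.2 p.2)
        ((volume : Measure ℝ).prod (volume : Measure ℝ)) :=
      (integrable_hh p.1).mul_prod (integrable_hh p.2)
    rwa [← Measure.volume_eq_prod] at this
  · have heq : (fun p : ℝ × ℝ => ∫ q : ℝ × ℝ, ‖hh q.1 p.1 * hh q.2 p.2‖)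
        = fun p : ℝ × ℝ => |p.1| * |p.2| := by
      funext p
      simp_rw [Real.norm_eq_abs, abs_mul]
      rw [Measure.volume_eq_prod, integral_prod_mul (fun s => |hh s p.1|) (fun s => |hh s p.2|),
        integral_abs_hh, integral_abs_hh]
    rw [heq]
    exact int_abs_mul hsq1 hsq2

lemma swap_identity (hsq1 : Integrable (fun p : ℝ × ℝ => p.1 ^ 2) m)
    (hsq2 : Integrable (fun p : ℝ × ℝ => p.2 ^ 2) m) :
    ∫ p, p.1 * p.2 ∂m
      = ∫ q : ℝ × ℝ, (∫ p, hh q.1 p.1 * hh q.2 p.2 ∂m) ∂(volume : Measure (ℝ × ℝ)) := by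
  have h1 : ∀ p : ℝ × ℝ, p.1 * p.2 = ∫ q : ℝ × ℝ, hh q.1 p.1 * hh q.2 p.2 := by
    intro p
    rw [Measure.volume_eq_prod, integral_prod_mul (fun s => hh s p.1) (fun s => hh s p.2),
      integral_hh, integral_hh]
  calc ∫ p, p.1 * p.2 ∂m
      = ∫ p : ℝ × ℝ, (∫ q : ℝ × ℝ, hh q.1 p.1 * hh q.2 p.2 ∂(volume : Measure (ℝ × ℝ))) ∂m :=
        integral_congr_ae (Eventually.of_forall h1)
    _ = _ := integral_integral_swap (f := fun (p : ℝ × ℝ) (q : ℝ × ℝ) => hh q.1 p.1 * hh q.2 p.2)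
        (integrable_kernel hsq1 hsq2)

lemma integrable_inner (hsq1 : Integrable (fun p : ℝ × ℝ => p.1 ^ 2) m)
    (hsq2 : Integrable (fun p : ℝ × ℝ => p.2 ^ 2) m) :
    Integrable (fun q : ℝ × ℝ => ∫ p, hh q.1 p.1 * hh q.2 p.2 ∂m) (volume : Measure (ℝ × ℝ)) :=
  Integrable.integral_prod_right (integrable_kernel hsq1 hsq2)

end Swap

/-! ### The quantile coupling -/

noncomputable def qcoupling (μ ν : Measure ℝ) : Measure (ℝ × ℝ) :=
  (volume.restrict (Ioo (0:ℝ) 1)).map (fun u => (quantile μ u, quantile ν u))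

section QC
variable (μ ν : Measure ℝ) [IsProbabilityMeasure μ] [IsProbabilityMeasure ν]

lemma aemeasurable_qpair :
    AEMeasurable (fun u => (quantile μ u, quantile ν u)) (volume.restrict (Ioo (0:ℝ) 1)) :=
  (aemeasurable_quantile μ).prodMk (aemeasurable_quantile ν)

lemma qcoupling_fst : (qcoupling μ ν).map Prod.fst = μ := by
  rw [qcoupling, AEMeasurable.map_map_of_aemeasurable
    measurable_fst.aemeasurable (aemeasurable_qpair μ ν)]
  exact map_quantile μ

lemma qcoupling_snd : (qcoupling μ ν).map Prod.snd = ν := by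
  rw [qcoupling, AEMeasurable.map_map_of_aemeasurable
    measurable_snd.aemeasurable (aemeasurable_qpair μ ν)]
  exact map_quantile ν

lemma measure_Ioi_eq (s : ℝ) : μ (Ioi s) = ENNReal.ofReal (1 - cdf μ s) := by
  have h : Ioi s = (Iic s)ᶜ := by simp
  rw [h, measure_compl measurableSet_Iic (measure_ne_top μ _), measure_univ, ← ofReal_cdf μ s,
    ← ENNReal.ofReal_one, ← ENNReal.ofReal_sub _ (cdf_nonneg μ s)]

lemma qcoupling_quadrant (s t : ℝ) :
    qcoupling μ ν {p : ℝ × ℝ | s < p.1 ∧ t < p.2}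
      = ENNReal.ofReal (1 - max (cdf μ s) (cdf ν t)) := by
  rw [qcoupling, Measure.map_apply_of_aemeasurable (aemeasurable_qpair μ ν)
    (measurableSet_quadrant s t), Measure.restrict_apply' measurableSet_Ioo]
  have hset : (fun u => (quantile μ u, quantile ν u)) ⁻¹' {p : ℝ × ℝ | s < p.1 ∧ t < p.2}
      ∩ Ioo 0 1 = Ioo (max (cdf μ s) (cdf ν t)) 1 := by
    ext u
    simp only [mem_inter_iff, mem_preimage, mem_setOf_eq, mem_Ioo, max_lt_iff]
    constructor
    · rintro ⟨⟨h1, h2⟩, h3, h4⟩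
      exact ⟨⟨(lt_quantile_iff μ h3 h4).mp h1, (lt_quantile_iff ν h3 h4).mp h2⟩, h4⟩
    · rintro ⟨⟨h1, h2⟩, h4⟩
      have h3 : 0 < u := lt_of_le_of_lt (le_max_of_le_left (cdf_nonneg μ s)) (max_lt h1 h2)
      exact ⟨⟨(lt_quantile_iff μ h3 h4).mpr h1, (lt_quantile_iff ν h3 h4).mpr h2⟩, h3, h4⟩
  rw [hset, Real.volume_Ioo]

lemma min_Ioi_eq (s t : ℝ) :
    min (μ (Ioi s)) (ν (Ioi t)) = ENNReal.ofReal (1 - max (cdf μ s) (cdf ν t)) := by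
  rw [measure_Ioi_eq μ s, measure_Ioi_eq ν t]
  rcases le_total (cdf μ s) (cdf ν t) with h | h
  · rw [max_eq_right h, min_eq_right (ENNReal.ofReal_le_ofReal (by linarith))]
  · rw [max_eq_left h, min_eq_left (ENNReal.ofReal_le_ofReal (by linarith))]

instance : IsProbabilityMeasure (qcoupling μ ν) := coupling_prob (qcoupling_fst μ ν)

end QC

/-! ### The comparison -/

section Compare
variable {μ ν : Measure ℝ} [IsProbabilityMeasure μ] [IsProbabilityMeasure ν]
variable {m : Measure (ℝ × ℝ)} [IsProbabilityMeasure m]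

lemma quadrant_le (hm1 : m.map Prod.fst = μ) (hm2 : m.map Prod.snd = ν) (s t : ℝ) :
    m {p : ℝ × ℝ | s < p.1 ∧ t < p.2} ≤ qcoupling μ ν {p : ℝ × ℝ | s < p.1 ∧ t < p.2} := by
  rw [qcoupling_quadrant μ ν s t, ← min_Ioi_eq μ ν s t]
  refine le_min ?_ ?_
  · have hmB : m {p : ℝ × ℝ | s < p.1} = μ (Ioi s) := by
      rw [← hm1, Measure.map_apply measurable_fst measurableSet_Ioi]; rfl
    rw [← hmB]
    exact measure_mono fun p hp => hp.1
  · have hmC : m {p : ℝ × ℝ | t < p.2} = ν (Ioi t) := by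
      rw [← hm2, Measure.map_apply measurable_snd measurableSet_Ioi]; rfl
    rw [← hmC]
    exact measure_mono fun p hp => hp.2

lemma inner_le (hm1 : m.map Prod.fst = μ) (hm2 : m.map Prod.snd = ν) (s t : ℝ) :
    ∫ p, hh s p.1 * hh t p.2 ∂m ≤ ∫ p, hh s p.1 * hh t p.2 ∂(qcoupling μ ν) := by
  rw [inner_integral hm1 hm2 s t,
    inner_integral (qcoupling_fst μ ν) (qcoupling_snd μ ν) s t]
  have h := ENNReal.toReal_mono (measure_ne_top _ _) (quadrant_le hm1 hm2 s t)
  gcongr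

lemma mul_integral_le (hm1 : m.map Prod.fst = μ) (hm2 : m.map Prod.snd = ν)
    (hμ : Integrable (fun x => x ^ 2) μ) (hν : Integrable (fun x => x ^ 2) ν) :
    ∫ p, p.1 * p.2 ∂m ≤ ∫ p, p.1 * p.2 ∂(qcoupling μ ν) := by
  rw [swap_identity (int_sq_fst hm1 hμ) (int_sq_snd hm2 hν),
    swap_identity (int_sq_fst (qcoupling_fst μ ν) hμ) (int_sq_snd (qcoupling_snd μ ν) hν)]
  refine integral_mono (integrable_inner (int_sq_fst hm1 hμ) (int_sq_snd hm2 hν))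
    (integrable_inner (int_sq_fst (qcoupling_fst μ ν) hμ) (int_sq_snd (qcoupling_snd μ ν) hν))
    fun q => inner_le hm1 hm2 q.1 q.2

lemma cost_ge (hm1 : m.map Prod.fst = μ) (hm2 : m.map Prod.snd = ν)
    (hμ : Integrable (fun x => x ^ 2) μ) (hν : Integrable (fun x => x ^ 2) ν) :
    ∫ p, (p.1 - p.2) ^ 2 ∂(qcoupling μ ν) ≤ ∫ p, (p.1 - p.2) ^ 2 ∂m := by
  rw [integral_sq_cost hm1 hm2 hμ hν,
    integral_sq_cost (qcoupling_fst μ ν) (qcoupling_snd μ ν) hμ hν]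
  have := mul_integral_le hm1 hm2 hμ hν
  linarith

end Compare

/-- The coupling by quantile functions of a uniform random variable is optimal:
its quadratic cost equals the squared Wasserstein distance. -/
theorem optimal_coupling_quantile (μ ν : Measure ℝ)
    [IsProbabilityMeasure μ] [IsProbabilityMeasure ν]
    (hμ : FiniteSecondMoment μ) (hν : FiniteSecondMoment ν) :
    ∫ t in Set.Ioo (0:ℝ) 1, (quantile μ t - quantile ν t) ^ 2 = Wsq μ ν := by
  have hμ' : Integrable (fun x => x ^ 2) μ := hμ
  have hν' : Integrable (fun x => x ^ 2) ν := hν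
  have hLHS : ∫ t in Set.Ioo (0:ℝ) 1, (quantile μ t - quantile ν t) ^ 2
      = ∫ p, (p.1 - p.2) ^ 2 ∂(qcoupling μ ν) := by
    rw [qcoupling, integral_map (aemeasurable_qpair μ ν)
      (by fun_prop)]
  rw [hLHS]
  set S := { c : ℝ | ∃ m : Measure (ℝ × ℝ),
    m.map Prod.fst = μ ∧ m.map Prod.snd = ν ∧ c = ∫ p, (p.1 - p.2) ^ 2 ∂m } with hSdef
  have hmem : (∫ p, (p.1 - p.2) ^ 2 ∂(qcoupling μ ν)) ∈ S :=
    ⟨qcoupling μ ν, qcoupling_fst μ ν, qcoupling_snd μ ν, rfl⟩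
  have hlb : ∀ c ∈ S, (∫ p, (p.1 - p.2) ^ 2 ∂(qcoupling μ ν)) ≤ c := by
    rintro c ⟨m, hm1, hm2, rfl⟩
    haveI : IsProbabilityMeasure m := coupling_prob hm1
    exact cost_ge hm1 hm2 hμ' hν'
  exact le_antisymm (le_csInf ⟨_, hmem⟩ hlb) (csInf_le ⟨_, hlb⟩ hmem)
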